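/- There exist constants N and C such that for all integers n ≥ N and k ≥ C·ln(n), the function f : {0, 1, …, n−3} → ℝ defined by f(i) := C(n, i) · (ik)!/(k!)^i · e^{ik}/(n−2)^{ik} attains its maximum at i = n−3; that is, f(i) ≤ f(n−3) for all 0 ≤ i ≤ n−3. -/

import Mathlib

lemma pow_le_fact_mul_exp (k : ℕ) : (k:ℝ)^k ≤ (Nat.factorial k : ℝ) * Real.exp k := by
  induction k with
  | zero => simp
  | succ k ih =>
    have h1 : ((k:ℝ)+1)^k ≤ (k:ℝ)^k * Real.exp 1 := by
      rcases Nat.eq_zero_or_pos k with hk | hk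
      · subst hk; simp
      · have hkp : (0:ℝ) < k := by exact_mod_cast hk
        have h2 : (k:ℝ) + 1 ≤ (k:ℝ) * Real.exp (1/(k:ℝ)) := by
          have h3 := Real.add_one_le_exp (1/(k:ℝ))
          calc (k:ℝ) + 1 = (k:ℝ) * (1/(k:ℝ) + 1) := by field_simp; ring
          _ ≤ (k:ℝ) * Real.exp (1/(k:ℝ)) := by
              apply mul_le_mul_of_nonneg_left h3 hkp.le
        calc ((k:ℝ)+1)^k ≤ ((k:ℝ) * Real.exp (1/(k:ℝ)))^k := by
              apply pow_le_pow_left₀ (by positivity) h2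
        _ = (k:ℝ)^k * (Real.exp (1/(k:ℝ)))^k := by rw [mul_pow]
        _ = (k:ℝ)^k * Real.exp ((k:ℝ) * (1/(k:ℝ))) := by rw [← Real.exp_nat_mul]
        _ = (k:ℝ)^k * Real.exp 1 := by rw [mul_one_div, div_self hkp.ne']
    have hfact : (Nat.factorial (k+1) : ℝ) = ((k:ℝ)+1) * Nat.factorial k := by
      push_cast [Nat.factorial_succ]; ring
    push_cast
    calc ((k:ℝ)+1)^(k+1) = ((k:ℝ)+1) * ((k:ℝ)+1)^k := by ring
    _ ≤ ((k:ℝ)+1) * ((k:ℝ)^k * Real.exp 1) := by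
        apply mul_le_mul_of_nonneg_left h1 (by positivity)
    _ ≤ ((k:ℝ)+1) * ((Nat.factorial k * Real.exp k) * Real.exp 1) := by
        apply mul_le_mul_of_nonneg_left (mul_le_mul_of_nonneg_right ih (Real.exp_pos 1).le) (by positivity)
    _ = (Nat.factorial (k+1) : ℝ) * Real.exp ((k:ℝ)+1) := by
        rw [hfact, Real.exp_add]; push_cast; ring


lemma fact_mul_exp_le (k : ℕ) (hk : 1 ≤ k) :
    (Nat.factorial k : ℝ) * Real.exp k ≤ Real.exp 1 * k * (k:ℝ)^k := by
  induction k, hk using Nat.le_induction with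
  | base => simp [Nat.factorial]
  | succ k hk ih =>
    have hkp : (0:ℝ) < k := by exact_mod_cast hk
    -- key : e * k * k^k ≤ (k+1)^(k+1)
    have key : Real.exp 1 * (k:ℝ) * (k:ℝ)^k ≤ ((k:ℝ)+1)^(k+1) := by
      -- exp (1/(k+1)) ≤ (k+1)/k, so exp 1 ≤ ((k+1)/k)^(k+1)
      have h1 : Real.exp (1/((k:ℝ)+1)) ≤ ((k:ℝ)+1)/k := by
        have h2 := Real.add_one_le_exp (-(1/((k:ℝ)+1)))
        have h3 : (0:ℝ) < (k:ℝ)/((k:ℝ)+1) := by positivity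
        have h4 : (k:ℝ)/((k:ℝ)+1) ≤ Real.exp (-(1/((k:ℝ)+1))) := by
          calc (k:ℝ)/((k:ℝ)+1) = -(1/((k:ℝ)+1)) + 1 := by field_simp; ring
          _ ≤ _ := h2
        rw [Real.exp_neg] at h4
        have h6 := mul_le_mul_of_nonneg_right h4 (Real.exp_pos (1/((k:ℝ)+1))).le
        rw [inv_mul_cancel₀ (ne_of_gt (Real.exp_pos _))] at h6
        rw [le_div_iff₀ hkp]
        rw [div_mul_eq_mul_div, div_le_one (by positivity)] at h6
        linarith
      have h6 : Real.exp 1 ≤ (((k:ℝ)+1)/k)^(k+1) := by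
        have h7 : (Real.exp (1/((k:ℝ)+1)))^(k+1) ≤ (((k:ℝ)+1)/k)^(k+1) :=
          pow_le_pow_left₀ (Real.exp_pos _).le h1 _
        calc Real.exp 1 = Real.exp (((k:ℕ)+1:ℝ) * (1/((k:ℝ)+1))) := by
              rw [mul_one_div]; rw [div_self (by positivity : ((k:ℕ)+1:ℝ) ≠ 0)]
        _ = (Real.exp (1/((k:ℝ)+1)))^(k+1) := by
              rw [← Real.exp_nat_mul]; norm_num
        _ ≤ _ := h7
      calc Real.exp 1 * (k:ℝ) * (k:ℝ)^k ≤ (((k:ℝ)+1)/k)^(k+1) * (k:ℝ) * (k:ℝ)^k := by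
            apply mul_le_mul_of_nonneg_right (mul_le_mul_of_nonneg_right h6 hkp.le) (by positivity)
      _ = ((k:ℝ)+1)^(k+1) := by
          rw [div_pow]; field_simp; ring
    have hfact : (Nat.factorial (k+1) : ℝ) = ((k:ℝ)+1) * Nat.factorial k := by
      push_cast [Nat.factorial_succ]; ring
    calc (Nat.factorial (k+1) : ℝ) * Real.exp (k+1:ℕ)
        = ((k:ℝ)+1) * ((Nat.factorial k : ℝ) * Real.exp k) * Real.exp 1 := by
          rw [hfact]; push_cast [Real.exp_add]; ring
    _ ≤ ((k:ℝ)+1) * (Real.exp 1 * k * (k:ℝ)^k) * Real.exp 1 := by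
          apply mul_le_mul_of_nonneg_right (mul_le_mul_of_nonneg_left ih (by positivity)) (Real.exp_pos 1).le
    _ = Real.exp 1 * ((k:ℝ)+1) * (Real.exp 1 * (k:ℝ) * (k:ℝ)^k) := by ring
    _ ≤ Real.exp 1 * ((k:ℝ)+1) * ((k:ℝ)+1)^(k+1) := by
          apply mul_le_mul_of_nonneg_left key (by positivity)
    _ = Real.exp 1 * ((k+1:ℕ):ℝ) * ((k+1:ℕ):ℝ)^(k+1) := by push_cast; ring


-- C((j+1)k, k) ≥ j^k e^k / (e k)
lemma choose_lower (j k : ℕ) (hk : 1 ≤ k) :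
    (j:ℝ)^k * Real.exp k ≤ (Real.exp 1 * k) * (((j+1)*k).choose k : ℝ) := by
  have hd : (j*k)^k ≤ Nat.factorial k * (((j+1)*k).choose k) := by
    have he : (j+1)*k + 1 - k = j*k + 1 := by rw [add_mul, one_mul]; omega
    calc (j*k)^k ≤ ((j+1)*k + 1 - k)^k := by
          rw [he]; exact Nat.pow_le_pow_left (Nat.le_succ _) _
    _ ≤ ((j+1)*k).descFactorial k := Nat.pow_sub_le_descFactorial _ _
    _ = Nat.factorial k * (((j+1)*k).choose k) := Nat.descFactorial_eq_factorial_mul_choose _ _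
  have hdR : ((j:ℝ)*k)^k ≤ (Nat.factorial k : ℝ) * (((j+1)*k).choose k : ℝ) := by
    exact_mod_cast hd
  have h2 := fact_mul_exp_le k hk
  have hkpos : (0:ℝ) < (k:ℝ) := by exact_mod_cast hk
  have hkk : (0:ℝ) < (k:ℝ)^k := by positivity
  have hC : (0:ℝ) ≤ (((j+1)*k).choose k : ℝ) := by positivity
  -- j^k e^k * k^k ≤ e k C * k^k
  have key : (j:ℝ)^k * Real.exp k * (k:ℝ)^k ≤ (Real.exp 1 * k) * (((j+1)*k).choose k : ℝ) * (k:ℝ)^k := by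
    calc (j:ℝ)^k * Real.exp k * (k:ℝ)^k = ((j:ℝ)*k)^k * Real.exp k := by rw [mul_pow]; ring
    _ ≤ ((Nat.factorial k : ℝ) * (((j+1)*k).choose k : ℝ)) * Real.exp k := by
        apply mul_le_mul_of_nonneg_right hdR (Real.exp_pos _).le
    _ = ((Nat.factorial k : ℝ) * Real.exp k) * (((j+1)*k).choose k : ℝ) := by ring
    _ ≤ (Real.exp 1 * k * (k:ℝ)^k) * (((j+1)*k).choose k : ℝ) := by
        apply mul_le_mul_of_nonneg_right h2 hC
    _ = (Real.exp 1 * k) * (((j+1)*k).choose k : ℝ) * (k:ℝ)^k := by ring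
  exact le_of_mul_le_mul_right key hkk

-- C((j+1)k, k) ≤ (j+1)^k e^k
lemma choose_upper (j k : ℕ) :
    ((((j+1)*k).choose k : ℕ) : ℝ) ≤ ((j:ℝ)+1)^k * Real.exp k := by
  have hd : Nat.factorial k * (((j+1)*k).choose k) ≤ ((j+1)*k)^k := by
    rw [← Nat.descFactorial_eq_factorial_mul_choose]
    exact Nat.descFactorial_le_pow _ _
  have hdR : (Nat.factorial k : ℝ) * (((j+1)*k).choose k : ℝ) ≤ (((j:ℝ)+1)*k)^k := by
    exact_mod_cast hd
  have h1 := pow_le_fact_mul_exp k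
  have hfk : (0:ℝ) < (Nat.factorial k : ℝ) := by exact_mod_cast Nat.factorial_pos k
  have key : ((((j+1)*k).choose k : ℕ) : ℝ) * (k:ℝ)^k ≤ (((j:ℝ)+1)^k * Real.exp k) * (k:ℝ)^k := by
    calc ((((j+1)*k).choose k : ℕ) : ℝ) * (k:ℝ)^k
        ≤ ((((j+1)*k).choose k : ℕ) : ℝ) * ((Nat.factorial k : ℝ) * Real.exp k) := by
          apply mul_le_mul_of_nonneg_left h1 (by positivity)
    _ = ((Nat.factorial k : ℝ) * (((j+1)*k).choose k : ℝ)) * Real.exp k := by ring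
    _ ≤ (((j:ℝ)+1)*k)^k * Real.exp k := by
          apply mul_le_mul_of_nonneg_right hdR (Real.exp_pos _).le
    _ = (((j:ℝ)+1)^k * Real.exp k) * (k:ℝ)^k := by rw [mul_pow]; ring
  rcases Nat.eq_zero_or_pos k with hk | hk
  · subst hk; simp
  · have hkk : (0:ℝ) < (k:ℝ)^k := by positivity
    exact le_of_mul_le_mul_right key hkk

lemma fact_step (i k : ℕ) :
    ((((i+1)*k).factorial : ℕ) : ℝ)
      = ((((i+1)*k).choose k : ℕ) : ℝ) * (Nat.factorial k : ℝ) * ((i*k).factorial : ℝ) := by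
  have h := Nat.add_choose_mul_factorial_mul_factorial (i*k) k
  have h2 : (i+1)*k = i*k + k := by ring
  rw [h2]
  have h3 : (i*k + k).factorial = (i*k + k).choose k * Nat.factorial k * (i*k).factorial := by
    rw [← h]; ring
  exact_mod_cast (congrArg (Nat.cast (R := ℝ)) h3)


-- (j+1)^(jk) ≤ j^(jk) e^k
lemma succ_pow_le (j k : ℕ) : ((j:ℝ)+1)^(j*k) ≤ (j:ℝ)^(j*k) * Real.exp k := by
  rcases Nat.eq_zero_or_pos j with hj | hj
  · subst hj
    simp only [Nat.cast_zero, zero_add, Nat.zero_mul, pow_zero, one_mul]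
    exact Real.one_le_exp (by positivity)
  · have hjp : (0:ℝ) < j := by exact_mod_cast hj
    have h2 : (j:ℝ) + 1 ≤ (j:ℝ) * Real.exp (1/(j:ℝ)) := by
      have h3 := Real.add_one_le_exp (1/(j:ℝ))
      calc (j:ℝ) + 1 = (j:ℝ) * (1/(j:ℝ) + 1) := by field_simp; ring
      _ ≤ (j:ℝ) * Real.exp (1/(j:ℝ)) := mul_le_mul_of_nonneg_left h3 hjp.le
    calc ((j:ℝ)+1)^(j*k) ≤ ((j:ℝ) * Real.exp (1/(j:ℝ)))^(j*k) :=
          pow_le_pow_left₀ (by positivity) h2 _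
    _ = (j:ℝ)^(j*k) * (Real.exp (1/(j:ℝ)))^(j*k) := mul_pow _ _ _
    _ = (j:ℝ)^(j*k) * Real.exp (((j*k:ℕ):ℝ) * (1/(j:ℝ))) := by rw [← Real.exp_nat_mul]
    _ = (j:ℝ)^(j*k) * Real.exp k := by
        congr 1
        push_cast
        field_simp

-- (ik)! ≤ (k!)^i * i^(ik) * e^(ik)
lemma M_upper (i k : ℕ) :
    ((i*k).factorial : ℝ) ≤ (Nat.factorial k : ℝ)^i * (i:ℝ)^(i*k) * Real.exp ((i*k : ℕ) : ℝ) := by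
  induction i with
  | zero => simp
  | succ i ih =>
    have hC := choose_upper i k
    have key : ((i:ℝ)+1)^k * ((i:ℝ))^(i*k) ≤ ((i:ℝ)+1)^((i+1)*k) := by
      have h1 : (i:ℝ)^(i*k) ≤ ((i:ℝ)+1)^(i*k) :=
        pow_le_pow_left₀ (by positivity) (by linarith) _
      calc ((i:ℝ)+1)^k * ((i:ℝ))^(i*k) ≤ ((i:ℝ)+1)^k * ((i:ℝ)+1)^(i*k) :=
            mul_le_mul_of_nonneg_left h1 (by positivity)
      _ = ((i:ℝ)+1)^((i+1)*k) := by rw [← pow_add]; congr 1; ring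
    calc (((i+1)*k).factorial : ℝ)
        = ((((i+1)*k).choose k : ℕ) : ℝ) * (Nat.factorial k : ℝ) * ((i*k).factorial : ℝ) :=
          fact_step i k
    _ ≤ (((i:ℝ)+1)^k * Real.exp k) * (Nat.factorial k : ℝ) * ((i*k).factorial : ℝ) := by
          apply mul_le_mul_of_nonneg_right (mul_le_mul_of_nonneg_right hC (by positivity)) (by positivity)
    _ ≤ (((i:ℝ)+1)^k * Real.exp k) * (Nat.factorial k : ℝ) *
          ((Nat.factorial k : ℝ)^i * (i:ℝ)^(i*k) * Real.exp ((i*k : ℕ) : ℝ)) := by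
          apply mul_le_mul_of_nonneg_left ih (by positivity)
    _ = (Nat.factorial k : ℝ)^(i+1) * (((i:ℝ)+1)^k * (i:ℝ)^(i*k)) *
          (Real.exp k * Real.exp ((i*k : ℕ) : ℝ)) := by ring
    _ ≤ (Nat.factorial k : ℝ)^(i+1) * ((i:ℝ)+1)^((i+1)*k) *
          (Real.exp k * Real.exp ((i*k : ℕ) : ℝ)) := by
          apply mul_le_mul_of_nonneg_right (mul_le_mul_of_nonneg_left key (by positivity)) (by positivity)
    _ = (Nat.factorial k : ℝ)^(i+1) * (((i+1):ℕ):ℝ)^((i+1)*k) * Real.exp (((i+1)*k : ℕ) : ℝ) := by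
          rw [← Real.exp_add]; push_cast; ring_nf

-- (k!)^(j+1) * j^(jk) ≤ ((j+1)k)! * (e k)^j
lemma M_lower (j k : ℕ) (hk : 1 ≤ k) :
    (Nat.factorial k : ℝ)^(j+1) * (j:ℝ)^(j*k)
      ≤ ((((j+1)*k).factorial : ℕ) : ℝ) * (Real.exp 1 * k)^j := by
  induction j with
  | zero => simp
  | succ j ih =>
    have hsp := succ_pow_le j k
    have hcl := choose_lower (j+1) k hk
    push_cast at hcl
    have hfs := fact_step (j+1) k
    have hkf : (0:ℝ) < (Nat.factorial k : ℝ) := by exact_mod_cast Nat.factorial_pos k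
    calc (Nat.factorial k : ℝ)^(j+1+1) * (((j+1):ℕ):ℝ)^((j+1)*k)
        = (Nat.factorial k : ℝ)^(j+2) * (((j:ℝ)+1)^k * ((j:ℝ)+1)^(j*k)) := by
          push_cast; rw [← pow_add]; congr 2; ring
    _ ≤ (Nat.factorial k : ℝ)^(j+2) * (((j:ℝ)+1)^k * ((j:ℝ)^(j*k) * Real.exp k)) := by
          apply mul_le_mul_of_nonneg_left (mul_le_mul_of_nonneg_left hsp (by positivity)) (by positivity)
    _ = (((j:ℝ)+1)^k * Real.exp k) * ((Nat.factorial k : ℝ)^(j+1) * (j:ℝ)^(j*k)) *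
          (Nat.factorial k : ℝ) := by ring
    _ ≤ ((Real.exp 1 * k) * ((((j+2)*k).choose k : ℕ) : ℝ)) *
          ((((j+1)*k).factorial : ℕ) : ℝ) * (Real.exp 1 * k)^j * (Nat.factorial k : ℝ) := by
          have h1 : (((j:ℝ)+1)^k * Real.exp k) * ((Nat.factorial k : ℝ)^(j+1) * (j:ℝ)^(j*k))
              ≤ ((Real.exp 1 * k) * ((((j+2)*k).choose k : ℕ) : ℝ)) *
                (((((j+1)*k).factorial : ℕ) : ℝ) * (Real.exp 1 * k)^j) := by
            apply mul_le_mul _ ih (by positivity) (by positivity)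
            · convert hcl using 3 <;> push_cast <;> ring
          calc (((j:ℝ)+1)^k * Real.exp k) * ((Nat.factorial k : ℝ)^(j+1) * (j:ℝ)^(j*k)) *
                (Nat.factorial k : ℝ)
              ≤ ((Real.exp 1 * k) * ((((j+2)*k).choose k : ℕ) : ℝ)) *
                (((((j+1)*k).factorial : ℕ) : ℝ) * (Real.exp 1 * k)^j) * (Nat.factorial k : ℝ) := by
                apply mul_le_mul_of_nonneg_right h1 hkf.le
          _ = _ := by ring
    _ = (((((j+2)*k).choose k : ℕ) : ℝ) * (Nat.factorial k : ℝ) * ((((j+1)*k).factorial : ℕ) : ℝ)) *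
          (Real.exp 1 * k)^(j+1) := by ring
    _ = ((((j+1+1)*k).factorial : ℕ) : ℝ) * (Real.exp 1 * k)^(j+1) := by
          rw [← hfs]


lemma log_le_tenth {x : ℝ} (hx : 400 ≤ x) : Real.log x ≤ x / 10 := by
  have hx0 : (0:ℝ) < x := by linarith
  have hs : Real.sqrt x ≤ x / 20 := by
    have h1 : x ≤ (x/20)^2 := by nlinarith
    calc Real.sqrt x ≤ Real.sqrt ((x/20)^2) := Real.sqrt_le_sqrt h1
    _ = x/20 := Real.sqrt_sq (by linarith)
  have hsp : (0:ℝ) < Real.sqrt x := Real.sqrt_pos.2 hx0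
  have h2 : Real.log (Real.sqrt x) ≤ Real.sqrt x - 1 := Real.log_le_sub_one_of_pos hsp
  have h3 : Real.log x = 2 * Real.log (Real.sqrt x) := by
    rw [Real.log_sqrt hx0.le]; ring
  linarith

noncomputable def F (n k i : ℕ) : ℝ :=
  (n.choose i : ℝ) * (Nat.factorial (i * k) : ℝ) / ((Nat.factorial k : ℝ)) ^ i *
    Real.exp ((i : ℝ) * (k : ℝ)) / ((n : ℝ) - 2) ^ (i * k)

lemma F_eq (n k i : ℕ) :
    F n k i = (n.choose i : ℝ) * (Nat.factorial (i * k) : ℝ) * Real.exp ((i : ℝ) * (k : ℝ)) /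
      (((Nat.factorial k : ℝ)) ^ i * ((n : ℝ) - 2) ^ (i * k)) := by
  unfold F; rw [div_mul_eq_mul_div, div_div]

lemma tail_step (n k j : ℕ) (hn : 1000 ≤ n) (hk6 : (600:ℝ) ≤ (k:ℝ))
    (hlog : Real.log n ≤ (k:ℝ)/100) (hj : n < 2*j) (hj3 : j + 1 ≤ n - 3) :
    F n k j ≤ F n k (j+1) := by
  have hk1 : 1 ≤ k := by
    have : (1:ℝ) ≤ (k:ℝ) := by linarith
    exact_mod_cast this
  have hkR : (0:ℝ) < k := by positivity
  have hnR : (0:ℝ) < n := by positivity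
  have hn2 : (0:ℝ) < (n:ℝ) - 2 := by
    have : (1000:ℝ) ≤ n := by exact_mod_cast hn
    linarith
  have hfk : (0:ℝ) < (Nat.factorial k : ℝ) := by exact_mod_cast Nat.factorial_pos k
  set E := Real.exp 1 with hE
  have hEpos : (0:ℝ) < E := Real.exp_pos 1
  have hE2 : (2:ℝ) ≤ E := by
    have := Real.exp_one_gt_d9; rw [hE]; linarith
  have hEk : Real.exp (k:ℝ) = E^k := by
    rw [hE, ← Real.exp_nat_mul]; norm_num
  set C := (((j+1)*k).choose k : ℝ) with hC
  have hCpos : (0:ℝ) < C := by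
    rw [hC]; exact_mod_cast Nat.choose_pos (by nlinarith [Nat.one_le_iff_ne_zero.1 hk1] : k ≤ (j+1)*k)
  -- scalar1 : n * (n-2)^k ≤ C * E^k
  have scalar1 : (n:ℝ) * ((n:ℝ)-2)^k ≤ C * E^k := by
    have hjR : (n:ℝ) < 2*(j:ℝ) := by exact_mod_cast hj
    have t1 : ((n:ℝ)-2)^k ≤ (2*(j:ℝ))^k :=
      pow_le_pow_left₀ (by linarith) (by linarith) k
    have t2 : E * (n:ℝ) * (k:ℝ) ≤ E^k := by
      have l1 : Real.log (k:ℝ) ≤ (k:ℝ)/10 := log_le_tenth (by linarith)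
      have l3 : (1:ℝ) + Real.log n + Real.log k ≤ (k:ℝ) := by linarith
      calc E * (n:ℝ) * (k:ℝ) = Real.exp (1 + Real.log n + Real.log k) := by
            rw [Real.exp_add, Real.exp_add, Real.exp_log hnR, Real.exp_log hkR, hE]
      _ ≤ Real.exp (k:ℝ) := Real.exp_le_exp.2 l3
      _ = E^k := hEk
    have t3 : (j:ℝ)^k * E^k ≤ (E * k) * C := by
      have := choose_lower j k hk1
      rw [hEk] at this; rw [hC]; exact_mod_cast this
    have key : (n:ℝ) * ((n:ℝ)-2)^k * (E * k) ≤ C * E^k * (E * k) := by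
      calc (n:ℝ) * ((n:ℝ)-2)^k * (E * k) = (E * n * k) * ((n:ℝ)-2)^k := by ring
      _ ≤ E^k * ((n:ℝ)-2)^k := mul_le_mul_of_nonneg_right t2 (by positivity)
      _ ≤ E^k * (2*(j:ℝ))^k := mul_le_mul_of_nonneg_left t1 (by positivity)
      _ = (2*E)^k * (j:ℝ)^k := by rw [mul_pow, mul_pow]; ring
      _ ≤ (E*E)^k * (j:ℝ)^k := by
          apply mul_le_mul_of_nonneg_right (pow_le_pow_left₀ (by linarith) (by nlinarith) k) (by positivity)
      _ = ((j:ℝ)^k * E^k) * E^k := by rw [mul_pow]; ring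
      _ ≤ ((E * k) * C) * E^k := mul_le_mul_of_nonneg_right t3 (by positivity)
      _ = C * E^k * (E * k) := by ring
    exact le_of_mul_le_mul_right key (by positivity)
  -- choose relation
  have hjn : j ≤ n := by omega
  have hc : (n.choose j : ℝ) * ((n:ℝ) - (j:ℝ)) = (n.choose (j+1) : ℝ) * ((j:ℝ)+1) := by
    have h := Nat.choose_succ_right_eq n j
    have : ((n.choose (j+1)) * (j+1) : ℕ) = ((n.choose j) * (n - j) : ℕ) := h
    have h2 : ((n.choose (j+1)) : ℝ) * ((j:ℝ)+1) = ((n.choose j) : ℝ) * (((n - j : ℕ)) : ℝ) := by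
      exact_mod_cast this
    rw [h2, Nat.cast_sub hjn]
  have hnj4 : (4:ℝ) ≤ (n:ℝ) - (j:ℝ) := by
    have h4 : j + 4 ≤ n := by omega
    have : ((j:ℝ) + 4) ≤ (n:ℝ) := by exact_mod_cast h4
    linarith
  have hj1n : ((j:ℝ)+1) ≤ (n:ℝ) := by
    have : j + 1 ≤ n := by omega
    exact_mod_cast this
  have hchj : (0:ℝ) ≤ (n.choose j : ℝ) := by positivity
  -- key : choose_j * (n-2)^k ≤ choose_{j+1} * (C * E^k)
  have key : (n.choose j : ℝ) * ((n:ℝ)-2)^k ≤ (n.choose (j+1) : ℝ) * (C * E^k) := by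
    have hj1pos : (0:ℝ) < (j:ℝ)+1 := by positivity
    have step : (n.choose j : ℝ) * ((n:ℝ)-2)^k * ((j:ℝ)+1)
        ≤ (n.choose (j+1) : ℝ) * (C * E^k) * ((j:ℝ)+1) := by
      calc (n.choose j : ℝ) * ((n:ℝ)-2)^k * ((j:ℝ)+1)
          ≤ (n.choose j : ℝ) * ((n:ℝ)-2)^k * (n:ℝ) := by
            apply mul_le_mul_of_nonneg_left hj1n (by positivity)
      _ = (n.choose j : ℝ) * ((n:ℝ) * ((n:ℝ)-2)^k) := by ring
      _ ≤ (n.choose j : ℝ) * (C * E^k) := mul_le_mul_of_nonneg_left scalar1 hchj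
      _ ≤ ((n.choose j : ℝ) * ((n:ℝ) - (j:ℝ))) * (C * E^k) := by
          apply mul_le_mul_of_nonneg_right _ (by positivity)
          nlinarith
      _ = (n.choose (j+1) : ℝ) * (C * E^k) * ((j:ℝ)+1) := by rw [hc]; ring
    exact le_of_mul_le_mul_right step hj1pos
  -- final assembly
  rw [F_eq, F_eq]
  rw [div_le_div_iff₀ (by positivity) (by positivity)]
  have hexp : Real.exp (((j:ℕ)+1:ℝ) * (k:ℝ)) = Real.exp ((j:ℝ)*(k:ℝ)) * Real.exp (k:ℝ) := by
    rw [← Real.exp_add]; ring_nf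
  have hfs := fact_step j k
  have hpow1 : (Nat.factorial k : ℝ)^(j+1) = (Nat.factorial k : ℝ)^j * (Nat.factorial k : ℝ) :=
    pow_succ _ _
  have hpow2 : ((n:ℝ)-2)^((j+1)*k) = ((n:ℝ)-2)^(j*k) * ((n:ℝ)-2)^k := by
    rw [← pow_add]; congr 1; ring
  push_cast
  rw [hexp, hfs, hpow1, hpow2, hEk]
  have hXpos : (0:ℝ) ≤ ((j*k).factorial : ℝ) * Real.exp ((j:ℝ)*(k:ℝ)) * (Nat.factorial k : ℝ)^j *
      (Nat.factorial k : ℝ) * ((n:ℝ)-2)^(j*k) := by positivity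
  have h := mul_le_mul_of_nonneg_left key hXpos
  rw [hC] at h
  linarith [h]



lemma pow_exp_form {x : ℝ} (hx : 0 < x) (e : ℕ) : x^e = Real.exp ((e:ℝ) * Real.log x) := by
  rw [← Real.exp_log hx, ← Real.exp_nat_mul, Real.log_exp]

lemma cast_pow_exp_form (i e : ℕ) (he : i = 0 → e = 0) :
    ((i:ℝ))^e = Real.exp ((e:ℝ) * Real.log i) := by
  rcases Nat.eq_zero_or_pos i with h | h
  · subst h; rw [he rfl]; simp
  · exact pow_exp_form (by exact_mod_cast h) e

lemma direct_case (n k i : ℕ) (hn : 1000 ≤ n) (hk6 : (600:ℝ) ≤ (k:ℝ))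
    (hlog : Real.log n ≤ (k:ℝ)/100) (hi2 : 2*i ≤ n) :
    F n k i ≤ F n k (n-3) := by
  have hk1 : 1 ≤ k := by
    have : (1:ℝ) ≤ (k:ℝ) := by linarith
    exact_mod_cast this
  have hnR : (1000:ℝ) ≤ (n:ℝ) := by exact_mod_cast hn
  have hKpos : (0:ℝ) < k := by positivity
  have hNpos : (0:ℝ) < n := by linarith
  have hn2 : (0:ℝ) < (n:ℝ) - 2 := by linarith
  have hn4 : (0:ℝ) < (n:ℝ) - 4 := by linarith
  have hfk : (0:ℝ) < (Nat.factorial k : ℝ) := by exact_mod_cast Nat.factorial_pos k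
  have hIpos : (0:ℝ) ≤ (i:ℝ) := by positivity
  have hI2 : 2*(i:ℝ) ≤ (n:ℝ) := by exact_mod_cast hi2
  have hch0 : (n.choose i : ℝ) ≤ (n:ℝ)^n := by
    have h1 : n.choose i ≤ n^n := le_trans (Nat.choose_le_pow n i)
      (Nat.pow_le_pow_right (by omega) (by omega))
    exact_mod_cast h1
  set E := Real.exp 1 with hE
  have hEpos : (0:ℝ) < E := Real.exp_pos 1
  set N := (n:ℝ) with hNdef
  set K := (k:ℝ) with hKdef
  set I := (i:ℝ) with hIdef
  -- cast identities
  have hcn3 : ((n-3:ℕ):ℝ) = N - 3 := by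
    rw [Nat.cast_sub (by omega)]; norm_num; exact hNdef.symm
  have hcn4 : ((n-4:ℕ):ℝ) = N - 4 := by
    rw [Nat.cast_sub (by omega)]; norm_num; exact hNdef.symm
  have hexpik : Real.exp (I * K) = E^(i*k) := by
    rw [hE, ← Real.exp_nat_mul, mul_one]; push_cast; ring_nf; rfl
  have hexpmk : Real.exp (((n-3:ℕ):ℝ) * K) = E^((n-3)*k) := by
    rw [hE, ← Real.exp_nat_mul, mul_one]; push_cast; ring_nf; rfl
  -- Step 1 : F i ≤ U
  set U := N^n * I^(i*k) * E^(2*(i*k)) / (N-2)^(i*k) with hU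
  have step1 : F n k i ≤ U := by
    have hch := hch0
    have hM := M_upper i k
    have hexpik2 : Real.exp ((i*k : ℕ) : ℝ) = E^(i*k) := by
      rw [hE, ← Real.exp_nat_mul, mul_one]
    rw [hexpik2] at hM
    have hnum : (n.choose i : ℝ) * ((i*k).factorial : ℝ) * Real.exp (I * K)
        ≤ N^n * ((Nat.factorial k : ℝ)^i * I^(i*k) * E^(i*k)) * E^(i*k) := by
      rw [hexpik]
      apply mul_le_mul _ le_rfl (by positivity) (by positivity)
      apply mul_le_mul hch hM (by positivity) (by positivity)
    have hden : (0:ℝ) < (Nat.factorial k : ℝ)^i * (N-2)^(i*k) := by positivity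
    calc F n k i = (n.choose i : ℝ) * ((i*k).factorial : ℝ) * Real.exp (I * K) /
          ((Nat.factorial k : ℝ)^i * (N-2)^(i*k)) := F_eq n k i
    _ ≤ N^n * ((Nat.factorial k : ℝ)^i * I^(i*k) * E^(i*k)) * E^(i*k) /
          ((Nat.factorial k : ℝ)^i * (N-2)^(i*k)) := by
        exact div_le_div_of_nonneg_right hnum hden.le
    _ = U := by
        rw [hU, show 2*(i*k) = i*k + i*k by ring, pow_add]
        field_simp
  -- Step 2 : L ≤ F (n-3)
  set L := (N-4)^((n-4)*k) * E^((n-3)*k) / ((E*K)^(n-4) * (N-2)^((n-3)*k)) with hL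
  have hEK : (0:ℝ) < E*K := by positivity
  have step2 : L ≤ F n k (n-3) := by
    have hml := M_lower (n-4) k hk1
    rw [show (n-4)+1 = n-3 by omega] at hml
    rw [hcn4] at hml
    have hchm : (1:ℝ) ≤ (n.choose (n-3) : ℝ) := by
      have : 0 < n.choose (n-3) := Nat.choose_pos (by omega)
      exact_mod_cast this
    rw [hL, F_eq, div_le_div_iff₀ (by positivity) (by positivity), hexpmk]
    have hcomb : (N-4)^((n-4)*k) * (Nat.factorial k : ℝ)^(n-3)
        ≤ (n.choose (n-3) : ℝ) * (((n-3)*k).factorial : ℝ) * (E*K)^(n-4) := by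
      calc (N-4)^((n-4)*k) * (Nat.factorial k : ℝ)^(n-3)
          ≤ (((n-3)*k).factorial : ℝ) * (E*K)^(n-4) := by linarith [hml]
      _ = 1 * ((((n-3)*k).factorial : ℝ) * (E*K)^(n-4)) := by ring
      _ ≤ (n.choose (n-3) : ℝ) * ((((n-3)*k).factorial : ℝ) * (E*K)^(n-4)) := by
          apply mul_le_mul_of_nonneg_right hchm (by positivity)
      _ = (n.choose (n-3) : ℝ) * (((n-3)*k).factorial : ℝ) * (E*K)^(n-4) := by ring
    have hXpos : (0:ℝ) ≤ E^((n-3)*k) * (N-2)^((n-3)*k) := by positivity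
    have h := mul_le_mul_of_nonneg_left hcomb hXpos
    linarith [h]
  -- Step 3 : U ≤ L
  have step3 : U ≤ L := by
    rw [hU, hL, div_le_div_iff₀ (by positivity) (by positivity)]
    have h3n : 3 ≤ n := by omega
    have h4n : 4 ≤ n := by omega
    set Ln := Real.log N with hLn
    set Lk := Real.log K with hLk
    set Li := Real.log I with hLi
    set a := Real.log (N-2) with ha
    set b := Real.log (N-4) with hb
    have eN : N^n = Real.exp ((n:ℝ) * Ln) := pow_exp_form hNpos n
    have eI : I^(i*k) = Real.exp (((i*k:ℕ):ℝ) * Li) :=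
      cast_pow_exp_form i (i*k) (fun h => by rw [h, Nat.zero_mul])
    have eE2 : E^(2*(i*k)) = Real.exp ((2*(i*k):ℕ):ℝ) := by
      rw [hE, ← Real.exp_nat_mul, mul_one]
    have eE3 : E^((n-3)*k) = Real.exp (((n-3)*k:ℕ):ℝ) := by
      rw [hE, ← Real.exp_nat_mul, mul_one]
    have eEK : (E*K)^(n-4) = Real.exp (((n-4:ℕ):ℝ) * (1 + Lk)) := by
      have h1 : E*K = Real.exp (1 + Lk) := by
        rw [Real.exp_add, Real.exp_log hKpos, hE]
      rw [h1, ← Real.exp_nat_mul]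
    have ea1 : (N-2)^((n-3)*k) = Real.exp ((((n-3)*k:ℕ):ℝ) * a) := pow_exp_form hn2 _
    have ea2 : (N-2)^(i*k) = Real.exp (((i*k:ℕ):ℝ) * a) := pow_exp_form hn2 _
    have eb : (N-4)^((n-4)*k) = Real.exp ((((n-4)*k:ℕ):ℝ) * b) := pow_exp_form hn4 _
    rw [eN, eI, eE2, eE3, eEK, ea1, ea2, eb]
    simp only [← Real.exp_add]
    rw [Real.exp_le_exp]
    push_cast [Nat.cast_sub h3n, Nat.cast_sub h4n]
    -- scalar inequality
    have hLk10 : Lk ≤ K/10 := log_le_tenth (by linarith)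
    have hLnN : Ln ≤ N/10 := log_le_tenth (by linarith)
    have hLn100 : Ln ≤ K/100 := hlog
    have hlog2 := Real.log_two_gt_d9
    have hLknn : (0:ℝ) ≤ Lk := Real.log_nonneg (by linarith)
    have hli : Li ≤ Ln - Real.log 2 := by
      rcases Nat.eq_zero_or_pos i with h | h
      · have : Li = 0 := by rw [hLi, hIdef, h]; simp
        rw [this]
        have h2 : Real.log 2 ≤ Ln := Real.log_le_log (by norm_num) (by linarith)
        linarith
      · have hIpos' : (0:ℝ) < I := by rw [hIdef]; exact_mod_cast h
        have h1 : Li ≤ Real.log (N/2) := Real.log_le_log hIpos' (by linarith)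
        rw [Real.log_div (by linarith) (by norm_num)] at h1
        exact h1
    have hana : Ln - a ≤ 3/1000 := by
      have h1 : Ln - a = Real.log (N/(N-2)) := by
        rw [Real.log_div (by linarith) (by linarith)]
      have h2 : Real.log (N/(N-2)) ≤ N/(N-2) - 1 :=
        Real.log_le_sub_one_of_pos (by positivity)
      have h3 : N/(N-2) - 1 ≤ 3/1000 := by
        rw [div_sub_one (by linarith), div_le_div_iff₀ (by linarith) (by norm_num)]
        linarith
      linarith
    have hab2 : (N-4)*(a-b) ≤ 2 := by
      have h1 : a - b = Real.log ((N-2)/(N-4)) := by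
        rw [Real.log_div (by linarith) (by linarith)]
      have h2 : Real.log ((N-2)/(N-4)) ≤ (N-2)/(N-4) - 1 :=
        Real.log_le_sub_one_of_pos (by positivity)
      have h3 : (N-4) * ((N-2)/(N-4) - 1) = 2 := by field_simp; ring
      have h4 : a - b ≤ (N-2)/(N-4) - 1 := by linarith
      have h5 := mul_le_mul_of_nonneg_left h4 hn4.le
      linarith
    have haLn : a ≤ Ln := Real.log_le_log hn2 (by linarith)
    have hX : Li + 2 - a ≤ 1.31 := by linarith
    have hT1a : I*(Li + 2 - a) ≤ I*1.31 := mul_le_mul_of_nonneg_left hX hIpos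
    have hT1c : I*(1.31:ℝ) ≤ (N/2)*1.31 :=
      mul_le_mul_of_nonneg_right (by linarith) (by norm_num)
    have hG : I*Li + 2*I + (N-3-I)*a - (N-4)*b - (N-3) ≤ -(24/100)*N := by
      linarith [hT1a, hT1c, hab2, haLn, hLnN, hnR]
    have hKG := mul_le_mul_of_nonneg_left hG hKpos.le
    have hNLn := mul_le_mul_of_nonneg_left hLn100 hNpos.le
    have hNLk : N*(1+Lk) ≤ N*(1+K/10) :=
      mul_le_mul_of_nonneg_left (by linarith) hNpos.le
    have hN4Lk : (N-4)*(1+Lk) ≤ N*(1+Lk) :=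
      mul_le_mul_of_nonneg_right (by linarith) (by linarith)
    have hNK : N*600 ≤ N*K := mul_le_mul_of_nonneg_left hk6 hNpos.le
    linarith [hKG, hNLn, hNLk, hN4Lk, hNK, hNpos, hKpos]
  calc F n k i ≤ U := step1
  _ ≤ L := step3
  _ ≤ F n k (n-3) := step2



lemma tail_chain (n k : ℕ) (hn : 1000 ≤ n) (hk6 : (600:ℝ) ≤ (k:ℝ))
    (hlog : Real.log n ≤ (k:ℝ)/100) :
    ∀ d i, n < 2*i → i + d = n - 3 → F n k i ≤ F n k (n-3) := by
  intro d
  induction d with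
  | zero => intro i _ h; rw [show i = n - 3 by omega]
  | succ d ih =>
    intro i hi h
    calc F n k i ≤ F n k (i+1) := tail_step n k i hn hk6 hlog hi (by omega)
    _ ≤ F n k (n-3) := ih (i+1) (by omega) (by omega)

/-- for `n` large and `k ≥ C·ln n`, the function
`f(i) = C(n,i)·(ik)!/(k!)^i · e^(ik)/(n−2)^(ik)` on `{0, …, n−3}` attains its maximum
at `i = n − 3`. -/
theorem combinatorial_function_maximized_at_end :
    ∃ (N : ℕ) (C : ℝ), ∀ n k : ℕ, N ≤ n → C * Real.log n ≤ (k : ℝ) →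
      ∀ i : ℕ, i ≤ n - 3 →
        (n.choose i : ℝ) * (Nat.factorial (i * k) : ℝ) / ((Nat.factorial k : ℝ)) ^ i *
            Real.exp ((i : ℝ) * (k : ℝ)) / ((n : ℝ) - 2) ^ (i * k)
          ≤ (n.choose (n - 3) : ℝ) * (Nat.factorial ((n - 3) * k) : ℝ) /
              ((Nat.factorial k : ℝ)) ^ (n - 3) *
            Real.exp (((n - 3 : ℕ) : ℝ) * (k : ℝ)) / ((n : ℝ) - 2) ^ ((n - 3) * k) := by
  refine ⟨1000, 100, fun n k hn hk i hi => ?_⟩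
  have hnR : (1000:ℝ) ≤ (n:ℝ) := by exact_mod_cast hn
  have hln : Real.log 512 ≤ Real.log n := by
    apply Real.log_le_log (by norm_num)
    linarith
  have h512 : Real.log 512 = 9 * Real.log 2 := by
    rw [show (512:ℝ) = 2^9 by norm_num, Real.log_pow]
    norm_num
  have hlog2 := Real.log_two_gt_d9
  have hk6 : (600:ℝ) ≤ (k:ℝ) := by
    have : (6:ℝ) ≤ Real.log n := by rw [h512] at hln; linarith
    linarith
  have hlog : Real.log n ≤ (k:ℝ)/100 := by linarith
  suffices h : F n k i ≤ F n k (n-3) by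
    unfold F at h
    exact h
  by_cases hc : 2*i ≤ n
  · exact direct_case n k i hn hk6 hlog hc
  · exact tail_chain n k hn hk6 hlog ((n-3) - i) i (by omega) (by omega)
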